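/- For 0 < ε < 1/4 set Λ = ε^{-1/4} and define f : [0,π] → ℝ by f(r) = 2 arctan(Λ tan r) for 0 ≤ r ≤ π/2 and f(r) = 2 arctan(Λ tan r) + 2π for π/2 < r ≤ π. Then f(0)=0, f(π)=2π, f is monotone increasing, and the Dirichlet energy of the associated rotationally symmetric map satisfies (1/2)∫_{S²}|∇u_f|² dA = 8π∫₀¹ Λ^{-2}(1+t²)/(1−a²t²)² dt ≤ 8πΛ²/(Λ²−1), where a² = 1 − Λ^{-2}. -/

import Mathlib

open MeasureTheory Real

private lemma sin_two_arctan' (y : ℝ) : Real.sin (2 * Real.arctan y) = 2 * y / (1 + y ^ 2) := by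
  have h : Real.sqrt (1 + y ^ 2) ^ 2 = 1 + y ^ 2 := Real.sq_sqrt (by positivity)
  have h0 : Real.sqrt (1 + y ^ 2) ≠ 0 := by positivity
  rw [Real.sin_two_mul, Real.sin_arctan, Real.cos_arctan]
  field_simp
  rw [h]

private lemma hasDerivAt_aux' (Λ r : ℝ) (hc : Real.cos r ≠ 0) :
    HasDerivAt (fun s => 2 * Real.arctan (Λ * Real.tan s))
      (2 * Λ / (Real.cos r ^ 2 + Λ ^ 2 * (1 - Real.cos r ^ 2))) r := by
  have hc2 : 0 < Real.cos r ^ 2 := by positivity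
  have hD : 0 < Real.cos r ^ 2 + Λ ^ 2 * Real.sin r ^ 2 := by positivity
  have h1 := (Real.hasDerivAt_tan hc).const_mul Λ
  have h2 := (Real.hasDerivAt_arctan (Λ * Real.tan r)).comp r h1
  have h3 := h2.const_mul 2
  refine h3.congr_deriv ?_
  rw [show (1 : ℝ) - Real.cos r ^ 2 = Real.sin r ^ 2 from (Real.sin_sq r).symm]
  rw [Real.tan_eq_sin_div_cos] at *
  field_simp

private lemma sinf_aux' (Λ r : ℝ) (hc : Real.cos r ≠ 0) :
    Real.sin (2 * Real.arctan (Λ * Real.tan r))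
      = Real.sin r * Real.cos r *
        (2 * Λ / (Real.cos r ^ 2 + Λ ^ 2 * (1 - Real.cos r ^ 2))) := by
  have hc2 : 0 < Real.cos r ^ 2 := by positivity
  have hD : 0 < Real.cos r ^ 2 + Λ ^ 2 * Real.sin r ^ 2 := by positivity
  rw [sin_two_arctan', show (1 : ℝ) - Real.cos r ^ 2 = Real.sin r ^ 2 from (Real.sin_sq r).symm,
    Real.tan_eq_sin_div_cos]
  have h1 : (1 : ℝ) + (Λ * (Real.sin r / Real.cos r)) ^ 2 ≠ 0 := by positivity
  field_simp

set_option maxHeartbeats 2000000 in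
theorem stmt19 (ε : ℝ) (hε : 0 < ε) (hε' : ε < 1 / 4)
    (Λ : ℝ) (hΛ : Λ = ε ^ (-(1 / 4 : ℝ)))
    (f : ℝ → ℝ)
    (hf : f = fun r =>
      if r < Real.pi / 2 then 2 * Real.arctan (Λ * Real.tan r)
      else if r = Real.pi / 2 then Real.pi
      else 2 * Real.arctan (Λ * Real.tan r) + 2 * Real.pi) :
    f 0 = 0 ∧ f Real.pi = 2 * Real.pi ∧ MonotoneOn f (Set.Icc 0 Real.pi) ∧
    Real.pi * (∫ r in (0 : ℝ)..Real.pi,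
        ((deriv f r) ^ 2 + Real.sin (f r) ^ 2 / Real.sin r ^ 2) * Real.sin r) =
      8 * Real.pi * (∫ t in (0 : ℝ)..1,
        (Λ ^ 2)⁻¹ * (1 + t ^ 2) / (1 - (1 - (Λ ^ 2)⁻¹) * t ^ 2) ^ 2) ∧
    8 * Real.pi * (∫ t in (0 : ℝ)..1,
        (Λ ^ 2)⁻¹ * (1 + t ^ 2) / (1 - (1 - (Λ ^ 2)⁻¹) * t ^ 2) ^ 2) ≤
      8 * Real.pi * Λ ^ 2 / (Λ ^ 2 - 1) := by
  have hπ := Real.pi_pos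
  have hΛ1 : 1 < Λ := by
    rw [hΛ, Real.one_lt_rpow_iff_of_pos hε]
    right
    exact ⟨by linarith, by norm_num⟩
  have hΛ0 : 0 < Λ := lt_trans one_pos hΛ1
  have hΛ2 : 1 < Λ ^ 2 := by nlinarith
  have hhalf : (0 : ℝ) < Real.pi / 2 := by positivity
  -- value at 0
  have hf0 : f 0 = 0 := by
    rw [hf]; simp [hhalf]
  -- value at π
  have hfπ : f Real.pi = 2 * Real.pi := by
    rw [hf]
    have h1 : ¬ (Real.pi < Real.pi / 2) := by linarith
    have h2 : Real.pi ≠ Real.pi / 2 := by intro h; linarith [h]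
    simp [h1, h2, Real.tan_pi]
  -- bounds on pieces
  have hlow : ∀ r, 0 ≤ r → r < Real.pi / 2 → 0 ≤ f r ∧ f r < Real.pi := by
    intro r h0 h1
    rw [hf]; simp only [if_pos h1]
    have htn : 0 ≤ Real.tan r := Real.tan_nonneg_of_nonneg_of_le_pi_div_two h0 h1.le
    have ha : 0 ≤ Real.arctan (Λ * Real.tan r) := by
      have := Real.arctan_strictMono.monotone (mul_nonneg hΛ0.le htn)
      simpa using this
    have hb := Real.arctan_lt_pi_div_two (Λ * Real.tan r)
    constructor <;> linarith
  have hhigh : ∀ r, Real.pi / 2 < r → r ≤ Real.pi → Real.pi < f r ∧ f r ≤ 2 * Real.pi := by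
    intro r h1 h2
    rw [hf]; simp only [if_neg (not_lt.2 h1.le), if_neg (ne_of_gt h1)]
    have hsub : Real.tan r = Real.tan (r - Real.pi) := by
      conv_lhs => rw [← sub_add_cancel r Real.pi, Real.tan_add_pi]
    have htn : Real.tan r ≤ 0 := by
      rw [hsub]
      exact Real.tan_nonpos_of_nonpos_of_neg_pi_div_two_le (by linarith) (by linarith)
    have ha : Real.arctan (Λ * Real.tan r) ≤ 0 := by
      have := Real.arctan_strictMono.monotone (mul_nonpos_of_nonneg_of_nonpos hΛ0.le htn)
      simpa using this
    have hb := Real.neg_pi_div_two_lt_arctan (Λ * Real.tan r)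
    constructor <;> linarith
  -- monotonicity
  have hmono : MonotoneOn f (Set.Icc 0 Real.pi) := by
    intro x hx y hy hxy
    rcases lt_trichotomy x (Real.pi / 2) with hx2 | hx2 | hx2
    · rcases lt_trichotomy y (Real.pi / 2) with hy2 | hy2 | hy2
      · rw [hf]; simp only [if_pos hx2, if_pos hy2]
        have h1 : Real.tan x ≤ Real.tan y := by
          rcases eq_or_lt_of_le hxy with rfl | h
          · exact le_refl _
          · exact (Real.tan_lt_tan_of_lt_of_lt_pi_div_two (by linarith [hx.1]) hy2 h).le
        have := Real.arctan_strictMono.monotone (mul_le_mul_of_nonneg_left h1 hΛ0.le)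
        linarith
      · have h1 := (hlow x hx.1 hx2).2
        have h2 : f y = Real.pi := by rw [hf]; simp [hy2]
        linarith
      · have h1 := (hlow x hx.1 hx2).2
        have h2 := (hhigh y hy2 hy.2).1
        linarith
    · rcases lt_trichotomy y (Real.pi / 2) with hy2 | hy2 | hy2
      · linarith
      · rw [hx2, hy2]
      · have h1 : f x = Real.pi := by rw [hf]; simp [hx2]
        have h2 := (hhigh y hy2 hy.2).1
        linarith
    · have hy2 : Real.pi / 2 < y := lt_of_lt_of_le hx2 hxy
      rw [hf]
      simp only [if_neg (not_lt.2 hx2.le), if_neg (ne_of_gt hx2),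
        if_neg (not_lt.2 hy2.le), if_neg (ne_of_gt hy2)]
      have hsx : Real.tan x = Real.tan (x - Real.pi) := by
        conv_lhs => rw [← sub_add_cancel x Real.pi, Real.tan_add_pi]
      have hsy : Real.tan y = Real.tan (y - Real.pi) := by
        conv_lhs => rw [← sub_add_cancel y Real.pi, Real.tan_add_pi]
      have h1 : Real.tan x ≤ Real.tan y := by
        rcases eq_or_lt_of_le hxy with rfl | h
        · exact le_refl _
        · rw [hsx, hsy]
          exact (Real.tan_lt_tan_of_lt_of_lt_pi_div_two (by linarith)
            (by linarith [hy.2]) (by linarith)).le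
      have := Real.arctan_strictMono.monotone (mul_le_mul_of_nonneg_left h1 hΛ0.le)
      linarith
  refine ⟨hf0, hfπ, hmono, ?_, ?_⟩
  · -- the energy identity
    have hderiv : ∀ r ∈ Set.Ioo 0 Real.pi, r ≠ Real.pi / 2 →
        deriv f r = 2 * Λ / (Real.cos r ^ 2 + Λ ^ 2 * (1 - Real.cos r ^ 2)) := by
      intro r hr hne
      rcases lt_or_gt_of_ne hne with h | h
      · have hc : Real.cos r ≠ 0 := (Real.cos_pos_of_mem_Ioo ⟨by linarith [hr.1], h⟩).ne'
        have hev : f =ᶠ[nhds r] (fun s => 2 * Real.arctan (Λ * Real.tan s)) := by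
          filter_upwards [Iio_mem_nhds h] with s hs
          rw [hf]; simp only [if_pos (Set.mem_Iio.mp hs)]
        rw [hev.deriv_eq, (hasDerivAt_aux' Λ r hc).deriv]
      · have hc : Real.cos r < 0 := Real.cos_neg_of_pi_div_two_lt_of_lt h (by linarith [hr.2])
        have hev : f =ᶠ[nhds r] (fun s => 2 * Real.arctan (Λ * Real.tan s) + 2 * Real.pi) := by
          filter_upwards [Ioi_mem_nhds h] with s hs
          have hs' : Real.pi / 2 < s := hs
          rw [hf]; simp only [if_neg (not_lt.2 hs'.le), if_neg (ne_of_gt hs')]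
        rw [hev.deriv_eq, ((hasDerivAt_aux' Λ r hc.ne).add_const (2 * Real.pi)).deriv]
    have hsinf : ∀ r ∈ Set.Ioo 0 Real.pi, r ≠ Real.pi / 2 →
        Real.sin (f r) = Real.sin r * Real.cos r *
          (2 * Λ / (Real.cos r ^ 2 + Λ ^ 2 * (1 - Real.cos r ^ 2))) := by
      intro r hr hne
      rcases lt_or_gt_of_ne hne with h | h
      · have hc : Real.cos r ≠ 0 := (Real.cos_pos_of_mem_Ioo ⟨by linarith [hr.1], h⟩).ne'
        rw [hf]; simp only [if_pos h]
        exact sinf_aux' Λ r hc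
      · have hc : Real.cos r < 0 := Real.cos_neg_of_pi_div_two_lt_of_lt h (by linarith [hr.2])
        rw [hf]; simp only [if_neg (not_lt.2 h.le), if_neg (ne_of_gt h)]
        rw [Real.sin_add_two_pi]
        exact sinf_aux' Λ r hc.ne
    have hcong : (∫ r in (0:ℝ)..Real.pi,
          ((deriv f r) ^ 2 + Real.sin (f r) ^ 2 / Real.sin r ^ 2) * Real.sin r)
        = ∫ r in (0:ℝ)..Real.pi,
            (2 * Λ / (Real.cos r ^ 2 + Λ ^ 2 * (1 - Real.cos r ^ 2))) ^ 2
              * (1 + Real.cos r ^ 2) * Real.sin r := by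
      apply intervalIntegral.integral_congr_ae
      have hne : ∀ᵐ (x : ℝ), x ≠ Real.pi / 2 := by
        refine MeasureTheory.ae_iff.mpr ?_
        simp only [not_not]
        rw [show {a : ℝ | a = Real.pi / 2} = {Real.pi / 2} from Set.setOf_eq_eq_singleton]
        exact Real.volume_singleton
      filter_upwards [hne] with x hx hmem
      rw [Set.uIoc_of_le hπ.le] at hmem
      rcases eq_or_lt_of_le hmem.2 with heq | hlt
      · rw [heq]; simp [Real.sin_pi]
      · have hx' : x ∈ Set.Ioo 0 Real.pi := ⟨hmem.1, hlt⟩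
        have hsx : (0:ℝ) < Real.sin x := Real.sin_pos_of_pos_of_lt_pi hmem.1 hlt
        have hDp : (0:ℝ) < Real.cos x ^ 2 + Λ ^ 2 * (1 - Real.cos x ^ 2) := by
          rw [show (1:ℝ) - Real.cos x ^ 2 = Real.sin x ^ 2 from (Real.sin_sq x).symm]
          positivity
        rw [hderiv x hx' hx, hsinf x hx' hx]
        field_simp
    set G : ℝ → ℝ := fun t => (2 * Λ / (t ^ 2 + Λ ^ 2 * (1 - t ^ 2))) ^ 2 * (1 + t ^ 2) with hG
    have hGcont : ContinuousOn G (Set.Icc (-1 : ℝ) 1) := by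
      have hden : ∀ t ∈ Set.Icc (-1:ℝ) 1, t ^ 2 + Λ ^ 2 * (1 - t ^ 2) ≠ 0 := by
        intro t ht
        have h1 : t ^ 2 ≤ 1 := by nlinarith [ht.1, ht.2]
        have : (0:ℝ) < t ^ 2 + Λ ^ 2 * (1 - t ^ 2) := by nlinarith
        exact this.ne'
      rw [hG]
      exact ((continuousOn_const.div (by fun_prop) hden).pow 2).mul (by fun_prop)
    have himg : Real.cos '' Set.uIcc (0:ℝ) Real.pi ⊆ Set.Icc (-1:ℝ) 1 := by
      rintro t ⟨s, -, rfl⟩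
      exact ⟨Real.neg_one_le_cos s, Real.cos_le_one s⟩
    have hsub : (∫ r in (0:ℝ)..Real.pi,
          (2 * Λ / (Real.cos r ^ 2 + Λ ^ 2 * (1 - Real.cos r ^ 2))) ^ 2
            * (1 + Real.cos r ^ 2) * Real.sin r)
        = ∫ t in (-1:ℝ)..1, G t := by
      have hkey := intervalIntegral.integral_comp_smul_deriv'
        (fun x (_ : x ∈ Set.uIcc (0:ℝ) Real.pi) => Real.hasDerivAt_cos x)
        ((Real.continuous_sin.neg).continuousOn) (hGcont.mono himg)
      rw [Real.cos_zero, Real.cos_pi] at hkey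
      have h2 : (∫ x in (0:ℝ)..Real.pi, (-Real.sin x) • (G ∘ Real.cos) x)
          = -∫ r in (0:ℝ)..Real.pi,
              (2 * Λ / (Real.cos r ^ 2 + Λ ^ 2 * (1 - Real.cos r ^ 2))) ^ 2
                * (1 + Real.cos r ^ 2) * Real.sin r := by
        rw [← intervalIntegral.integral_neg]
        apply intervalIntegral.integral_congr
        intro x _
        simp only [Function.comp_apply, smul_eq_mul, hG]
        ring
      rw [h2] at hkey
      have h3 := intervalIntegral.integral_symm (μ := volume) (a := (1:ℝ)) (b := (-1:ℝ)) (f := G)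
      linarith [hkey, h3]
    have hint : ∀ a b : ℝ, Set.uIcc a b ⊆ Set.Icc (-1:ℝ) 1 → IntervalIntegrable G volume a b :=
      fun a b h => (hGcont.mono h).intervalIntegrable
    have heven : (∫ t in (-1:ℝ)..1, G t) = 2 * ∫ t in (0:ℝ)..1, G t := by
      have h1 := intervalIntegral.integral_add_adjacent_intervals (a := (-1:ℝ)) (b := 0) (c := 1)
        (μ := volume) (f := G)
        (hint _ _ (by rw [Set.uIcc_of_le (by norm_num)]
                      exact fun x hx => ⟨hx.1, by linarith [hx.2]⟩))
        (hint _ _ (by rw [Set.uIcc_of_le (by norm_num)]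
                      exact fun x hx => ⟨by linarith [hx.1], hx.2⟩))
      have h2 : (∫ t in (-1:ℝ)..0, G t) = ∫ t in (0:ℝ)..1, G t := by
        have h3 := intervalIntegral.integral_comp_neg (a := (0:ℝ)) (b := 1) (f := G)
        simp only [neg_zero] at h3
        rw [← h3]
        apply intervalIntegral.integral_congr
        intro x _
        simp only [hG, neg_sq]
      linarith [h1, h2]
    have h8 : (∫ t in (0:ℝ)..1, G t)
        = 4 * ∫ t in (0:ℝ)..1, (Λ^2)⁻¹ * (1 + t^2) / (1 - (1 - (Λ^2)⁻¹) * t^2)^2 := by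
      rw [← intervalIntegral.integral_const_mul]
      apply intervalIntegral.integral_congr
      intro t ht
      rw [Set.uIcc_of_le (by norm_num : (0:ℝ) ≤ 1)] at ht
      have ht2 : t^2 ≤ 1 := by nlinarith [ht.1, ht.2]
      have hD : (0:ℝ) < t^2 + Λ^2 * (1 - t^2) := by nlinarith
      have hΛne : (Λ:ℝ) ^ 2 ≠ 0 := by positivity
      have h2 : 1 - (1 - (Λ^2)⁻¹) * t^2 = (t^2 + Λ^2 * (1 - t^2)) / Λ^2 := by
        field_simp; ring
      simp only [hG]
      rw [h2]
      field_simp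
      ring
    rw [hcong, hsub, heven, h8]
    ring
  · -- the upper bound
    have hinv : (0:ℝ) < (Λ^2)⁻¹ := by positivity
    have hapos : (0:ℝ) < 1 - (Λ^2)⁻¹ := by
      have := inv_lt_one_of_one_lt₀ hΛ2
      linarith
    obtain ⟨c, hc⟩ : ∃ c : ℝ, c = 1 - (Λ^2)⁻¹ := ⟨_, rfl⟩
    rw [show (1:ℝ) - (Λ^2)⁻¹ = c from hc.symm]
    rw [show (1:ℝ) - (Λ^2)⁻¹ = c from hc.symm] at hapos
    have h1c : (1:ℝ) - c = (Λ^2)⁻¹ := by rw [hc]; ring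
    have hdenpos : ∀ t ∈ Set.Icc (0:ℝ) 1, (0:ℝ) < 1 - c * t^2 := by
      intro t ht
      have ht2 : t^2 ≤ 1 := by nlinarith [ht.1, ht.2]
      nlinarith [hinv, h1c, mul_le_mul_of_nonneg_left ht2 hapos.le]
    have hne2 : ∀ t ∈ Set.Icc (0:ℝ) 1, ((1:ℝ) - c * t^2)^2 ≠ 0 :=
      fun t ht => pow_ne_zero _ (hdenpos t ht).ne'
    have hi1 : IntervalIntegrable (fun t : ℝ => (Λ^2)⁻¹ * (1 + t^2) / (1 - c * t^2)^2)
        volume 0 1 := by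
      apply ContinuousOn.intervalIntegrable
      rw [Set.uIcc_of_le (by norm_num : (0:ℝ) ≤ 1)]
      exact ContinuousOn.div
        ((by fun_prop : Continuous fun t : ℝ => (Λ^2)⁻¹ * (1 + t^2)).continuousOn)
        ((by fun_prop : Continuous fun t : ℝ => ((1:ℝ) - c * t^2)^2).continuousOn) hne2
    have hi2 : IntervalIntegrable (fun t : ℝ => ((Λ^2)⁻¹ / c) * ((1 + c * t^2) / (1 - c * t^2)^2))
        volume 0 1 := by
      apply ContinuousOn.intervalIntegrable
      rw [Set.uIcc_of_le (by norm_num : (0:ℝ) ≤ 1)]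
      exact continuousOn_const.mul (ContinuousOn.div
        ((by fun_prop : Continuous fun t : ℝ => (1:ℝ) + c * t^2).continuousOn)
        ((by fun_prop : Continuous fun t : ℝ => ((1:ℝ) - c * t^2)^2).continuousOn) hne2)
    have hle : (∫ t in (0:ℝ)..1, (Λ^2)⁻¹ * (1 + t^2) / (1 - c * t^2)^2)
        ≤ ∫ t in (0:ℝ)..1, ((Λ^2)⁻¹ / c) * ((1 + c * t^2) / (1 - c * t^2)^2) := by
      apply intervalIntegral.integral_mono_on (by norm_num) hi1 hi2
      intro t ht
      have hd := hdenpos t ht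
      have hnum : (Λ^2)⁻¹ * (1 + t^2) ≤ ((Λ^2)⁻¹ / c) * (1 + c * t^2) := by
        rw [div_mul_eq_mul_div, le_div_iff₀ hapos]
        nlinarith [mul_pos hinv hinv, h1c, sq_nonneg t]
      calc (Λ^2)⁻¹ * (1 + t^2) / (1 - c * t^2)^2
          ≤ (((Λ^2)⁻¹ / c) * (1 + c * t^2)) / (1 - c * t^2)^2 := by gcongr
        _ = ((Λ^2)⁻¹ / c) * ((1 + c * t^2) / (1 - c * t^2)^2) := by ring
    have hcne : c ≠ 0 := hapos.ne'
    have hF : ∀ t ∈ Set.uIcc (0:ℝ) 1,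
        HasDerivAt (fun t => ((Λ^2)⁻¹ / c) * (t / (1 - c * t^2)))
          (((Λ^2)⁻¹ / c) * ((1 + c * t^2) / (1 - c * t^2)^2)) t := by
      intro t ht
      rw [Set.uIcc_of_le (by norm_num : (0:ℝ) ≤ 1)] at ht
      have hd := hdenpos t ht
      have h1 : HasDerivAt (fun t : ℝ => 1 - c * t^2) (-(c * (2 * t))) t := by
        simpa using (((hasDerivAt_pow 2 t).const_mul c).const_sub 1)
      have h2 := (hasDerivAt_id t).div h1 hd.ne'
      have h3 := h2.const_mul ((Λ^2)⁻¹ / c)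
      refine h3.congr_deriv ?_
      field_simp
      simp only [id_eq]
      ring
    have hval : (∫ t in (0:ℝ)..1, ((Λ^2)⁻¹ / c) * ((1 + c * t^2) / (1 - c * t^2)^2))
        = Λ^2 / (Λ^2 - 1) := by
      rw [intervalIntegral.integral_eq_sub_of_hasDerivAt hF hi2]
      have hΛm1 : Λ^2 - 1 ≠ 0 := by intro h; rw [sub_eq_zero] at h; linarith
      have hΛne : (Λ:ℝ)^2 ≠ 0 := by positivity
      have hgoal : ((Λ^2)⁻¹ / c) * ((1:ℝ) / (1 - c * 1^2))
          - ((Λ^2)⁻¹ / c) * ((0:ℝ) / (1 - c * 0^2)) = Λ^2 / (Λ^2 - 1) := by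
        have h5 : (1:ℝ) - c * 1^2 ≠ 0 := (hdenpos 1 (by norm_num)).ne'
        rw [hc] at *
        field_simp
        try ring
      simpa using hgoal
    calc 8 * Real.pi * (∫ t in (0:ℝ)..1, (Λ^2)⁻¹ * (1 + t^2) / (1 - c * t^2)^2)
        ≤ 8 * Real.pi * (Λ^2 / (Λ^2 - 1)) := by
          apply mul_le_mul_of_nonneg_left (hle.trans hval.le) (by positivity)
      _ = 8 * Real.pi * Λ^2 / (Λ^2 - 1) := by ring
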